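/- Let Q ∈ ℝ^{n×n} be symmetric positive definite, a ∈ ℝ^n, c ∈ ℝ, and set κ = aᵀQ⁻¹a and γ = Q⁻¹a/(1 + κ). Define Ŷ_{c,Q} = {(x, z, t, w) ∈ ℝ^n × ℝ × ℝ × ℝ : z ∈ {0,1}, t ≥ xᵀQx + (c + w − aᵀx)², and w(1 − z) = 0}. Then the closure of the convex hull of Ŷ_{c,Q} equals the set of (x, z, t, w) ∈ ℝ^n × [0,1] × ℝ × ℝ for which there exists s ≥ 0 with w² ≤ s·z·(1 + κ) and t ≥ c² + 2c(w − aᵀx) + (x − w·γ)ᵀ(Q + aaᵀ)(x − w·γ) + s. -/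

import Mathlib

open Matrix Set

lemma vecMulVec_mulVec' {n : ℕ} (a b x : Fin n → ℝ) :
    vecMulVec a b *ᵥ x = (b ⬝ᵥ x) • a := by
  ext i
  simp [vecMulVec, mulVec, dotProduct, Finset.mul_sum, mul_assoc, mul_comm, mul_left_comm]

lemma amgm' {u v p : ℝ} (hu : 0 ≤ u) (hv : 0 ≤ v) (h : p ^ 2 ≤ u * v) : 2 * p ≤ u + v := by
  nlinarith [sq_nonneg (u - v), sq_nonneg (u + v)]

lemma persp {K w₁ z₁ s₁ w₂ z₂ s₂ l m : ℝ} (hK : 0 < K)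
    (hz₁ : 0 ≤ z₁) (hz₂ : 0 ≤ z₂) (hs₁ : 0 ≤ s₁) (hs₂ : 0 ≤ s₂)
    (h₁ : w₁ ^ 2 ≤ s₁ * z₁ * K) (h₂ : w₂ ^ 2 ≤ s₂ * z₂ * K)
    (hl : 0 ≤ l) (hm : 0 ≤ m) :
    (l * w₁ + m * w₂) ^ 2 ≤ (l * s₁ + m * s₂) * (l * z₁ + m * z₂) * K := by
  have hu : 0 ≤ s₁ * z₂ * K := by positivity
  have hv : 0 ≤ s₂ * z₁ * K := by positivity
  have hp : (w₁ * w₂) ^ 2 ≤ (s₁ * z₂ * K) * (s₂ * z₁ * K) := by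
    calc (w₁ * w₂) ^ 2 = w₁ ^ 2 * w₂ ^ 2 := by ring
    _ ≤ (s₁ * z₁ * K) * (s₂ * z₂ * K) := by
        apply mul_le_mul h₁ h₂ (sq_nonneg _) (by positivity)
    _ = (s₁ * z₂ * K) * (s₂ * z₁ * K) := by ring
  have key := amgm' hu hv hp
  nlinarith [mul_nonneg hl hm, sq_nonneg l, sq_nonneg m,
    mul_nonneg (mul_nonneg hl hm) (sub_nonneg.2 key),
    mul_nonneg (sq_nonneg l) (sub_nonneg.2 h₁),
    mul_nonneg (sq_nonneg m) (sub_nonneg.2 h₂)]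

lemma quad_convex {n : ℕ} {M : Matrix (Fin n) (Fin n) ℝ}
    (hpsd : ∀ u, 0 ≤ u ⬝ᵥ M *ᵥ u) (u v : Fin n → ℝ) {l m : ℝ}
    (hl : 0 ≤ l) (hm : 0 ≤ m) (hlm : l + m = 1) :
    (l • u + m • v) ⬝ᵥ M *ᵥ (l • u + m • v)
      ≤ l * (u ⬝ᵥ M *ᵥ u) + m * (v ⬝ᵥ M *ᵥ v) := by
  have hexp : (l • u + m • v) ⬝ᵥ M *ᵥ (l • u + m • v)
      = l^2 * (u ⬝ᵥ M *ᵥ u) + l*m*(u ⬝ᵥ M *ᵥ v) + l*m*(v ⬝ᵥ M *ᵥ u)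
        + m^2 * (v ⬝ᵥ M *ᵥ v) := by
    simp only [Matrix.mulVec_add, Matrix.mulVec_smul, dotProduct_add, add_dotProduct,
      dotProduct_smul, smul_dotProduct, smul_eq_mul]
    ring
  have hd : 0 ≤ (u - v) ⬝ᵥ M *ᵥ (u - v) := hpsd _
  have hdexp : (u - v) ⬝ᵥ M *ᵥ (u - v)
      = u ⬝ᵥ M *ᵥ u - u ⬝ᵥ M *ᵥ v - v ⬝ᵥ M *ᵥ u + v ⬝ᵥ M *ᵥ v := by
    simp only [Matrix.mulVec_sub, dotProduct_sub, sub_dotProduct]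
    ring
  rw [hexp]
  rw [hdexp] at hd
  have hm' : m = 1 - l := by linarith
  subst hm'
  nlinarith [mul_nonneg (mul_nonneg hl hm) hd]

lemma key_identity {n : ℕ} {Q : Matrix (Fin n) (Fin n) ℝ} (hQ : Q.PosDef)
    (a : Fin n → ℝ) (c : ℝ) (x : Fin n → ℝ) (w : ℝ) :
    c ^ 2 + 2 * c * (w - a ⬝ᵥ x) +
      (x - w • ((1 / (1 + a ⬝ᵥ Q⁻¹.mulVec a)) • Q⁻¹.mulVec a)) ⬝ᵥ
        (Q + vecMulVec a a).mulVec
          (x - w • ((1 / (1 + a ⬝ᵥ Q⁻¹.mulVec a)) • Q⁻¹.mulVec a)) +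
      w ^ 2 / (1 + a ⬝ᵥ Q⁻¹.mulVec a)
    = x ⬝ᵥ Q.mulVec x + (c + w - a ⬝ᵥ x) ^ 2 := by
  have hκ : 0 ≤ a ⬝ᵥ Q⁻¹.mulVec a := by have := (hQ.inv).posSemidef.dotProduct_mulVec_nonneg a; simpa using this
  obtain ⟨κ, hκdef⟩ : ∃ κ, κ = a ⬝ᵥ Q⁻¹.mulVec a := ⟨_, rfl⟩
  rw [← hκdef] at hκ ⊢
  have hK : (0:ℝ) < 1 + κ := by linarith
  obtain ⟨γ, hγdef⟩ : ∃ γ, γ = (1 / (1 + κ)) • Q⁻¹.mulVec a := ⟨_, rfl⟩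
  obtain ⟨M, hMdef⟩ : ∃ M, M = Q + vecMulVec a a := ⟨_, rfl⟩
  rw [← hγdef, ← hMdef]
  have hQs : Qᵀ = Q := by have := hQ.1; simpa [Matrix.IsHermitian] using this
  have hMs : Mᵀ = M := by
    rw [hMdef, transpose_add, hQs]
    congr 1
    ext i j; simp [vecMulVec, transpose_apply, mul_comm]
  have hQQinv : Q *ᵥ (Q⁻¹ *ᵥ a) = a := by
    rw [Matrix.mulVec_mulVec, Matrix.mul_nonsing_inv Q hQ.det_pos.ne'.isUnit, Matrix.one_mulVec]
  have hMQa : M *ᵥ (Q⁻¹ *ᵥ a) = (1 + κ) • a := by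
    rw [hMdef, Matrix.add_mulVec, hQQinv, vecMulVec_mulVec', ← hκdef]
    ext i; simp; ring
  have hMγ : M *ᵥ γ = a := by
    rw [hγdef, Matrix.mulVec_smul, hMQa, smul_smul]
    rw [one_div, inv_mul_cancel₀ hK.ne']
    exact one_smul _ _
  have haγ : a ⬝ᵥ γ = κ / (1 + κ) := by
    rw [hγdef, dotProduct_smul, smul_eq_mul, ← hκdef]; ring
  have hγa : γ ⬝ᵥ a = κ / (1 + κ) := by rw [dotProduct_comm]; exact haγ
  have hxMγ : x ⬝ᵥ M *ᵥ γ = a ⬝ᵥ x := by rw [hMγ, dotProduct_comm]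
  have hγMx : γ ⬝ᵥ M *ᵥ x = a ⬝ᵥ x := by
    rw [Matrix.dotProduct_mulVec, ← Matrix.mulVec_transpose, hMs, dotProduct_comm, hxMγ]
  have hγMγ : γ ⬝ᵥ M *ᵥ γ = κ / (1 + κ) := by rw [hMγ, hγa]
  have hxMx : x ⬝ᵥ M *ᵥ x = x ⬝ᵥ Q *ᵥ x + (a ⬝ᵥ x) ^ 2 := by
    rw [hMdef, Matrix.add_mulVec, dotProduct_add, vecMulVec_mulVec', dotProduct_smul,
      smul_eq_mul, dotProduct_comm x a, sq]
  have expand : (x - w • γ) ⬝ᵥ M *ᵥ (x - w • γ)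
      = x ⬝ᵥ M *ᵥ x - w * (a ⬝ᵥ x) - w * (a ⬝ᵥ x) + w ^ 2 * (κ / (1 + κ)) := by
    rw [Matrix.mulVec_sub, Matrix.mulVec_smul, hMγ, dotProduct_sub, sub_dotProduct,
      sub_dotProduct, smul_dotProduct, hγMx, dotProduct_smul, dotProduct_comm x a,
      smul_dotProduct, dotProduct_smul, hγa]
    simp only [smul_eq_mul]; ring
  rw [expand, hxMx]
  field_simp
  ring

/-- Convex hull description of the extended non-homogeneous set
`Ŷ_{c,Q} = {(x,z,t,w) : z ∈ {0,1}, t ≥ xᵀQx + (c + w - aᵀx)², w(1-z) = 0}`. -/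
theorem closure_convexHull_nonhomogeneous
    (n : ℕ) (Q : Matrix (Fin n) (Fin n) ℝ) (hQ : Q.PosDef) (a : Fin n → ℝ) (c : ℝ) :
    closure (convexHull ℝ
      {p : (Fin n → ℝ) × ℝ × ℝ × ℝ |
        (p.2.1 = 0 ∨ p.2.1 = 1) ∧
          p.1 ⬝ᵥ Q.mulVec p.1 + (c + p.2.2.2 - a ⬝ᵥ p.1) ^ 2 ≤ p.2.2.1 ∧
          p.2.2.2 * (1 - p.2.1) = 0}) =
    {p : (Fin n → ℝ) × ℝ × ℝ × ℝ |
      p.2.1 ∈ Set.Icc (0 : ℝ) 1 ∧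
        ∃ s : ℝ, 0 ≤ s ∧
          p.2.2.2 ^ 2 ≤ s * p.2.1 * (1 + a ⬝ᵥ Q⁻¹.mulVec a) ∧
          c ^ 2 + 2 * c * (p.2.2.2 - a ⬝ᵥ p.1) +
            (p.1 - p.2.2.2 • ((1 / (1 + a ⬝ᵥ Q⁻¹.mulVec a)) • Q⁻¹.mulVec a)) ⬝ᵥ
              (Q + vecMulVec a a).mulVec
                (p.1 - p.2.2.2 • ((1 / (1 + a ⬝ᵥ Q⁻¹.mulVec a)) • Q⁻¹.mulVec a)) +
            s ≤ p.2.2.1} := by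
  have hκ : 0 ≤ a ⬝ᵥ Q⁻¹.mulVec a := by have := (hQ.inv).posSemidef.dotProduct_mulVec_nonneg a; simpa using this
  have hK : (0:ℝ) < 1 + a ⬝ᵥ Q⁻¹.mulVec a := by linarith
  have hkey := key_identity hQ a c
  -- notation
  set K : ℝ := 1 + a ⬝ᵥ Q⁻¹.mulVec a with hKdef
  set γ : Fin n → ℝ := (1 / K) • Q⁻¹.mulVec a with hγdef
  set M : Matrix (Fin n) (Fin n) ℝ := Q + vecMulVec a a with hMdef
  set F : (Fin n → ℝ) → ℝ → ℝ := fun x w =>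
    c ^ 2 + 2 * c * (w - a ⬝ᵥ x) + (x - w • γ) ⬝ᵥ M *ᵥ (x - w • γ) with hFdef
  have hMpsd : ∀ u, 0 ≤ u ⬝ᵥ M *ᵥ u := by
    intro u
    have h1 : 0 ≤ u ⬝ᵥ Q *ᵥ u := by have := hQ.posSemidef.dotProduct_mulVec_nonneg u; simpa using this
    have h2 : u ⬝ᵥ M *ᵥ u = u ⬝ᵥ Q *ᵥ u + (a ⬝ᵥ u) ^ 2 := by
      rw [hMdef, Matrix.add_mulVec, dotProduct_add, vecMulVec_mulVec', dotProduct_smul,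
        smul_eq_mul, dotProduct_comm u a, sq]
    rw [h2]; positivity
  have hkey' : ∀ x w, F x w + w ^ 2 / K = x ⬝ᵥ Q.mulVec x + (c + w - a ⬝ᵥ x) ^ 2 :=
    fun x w => hkey x w
  -- the two sets
  set Y : Set ((Fin n → ℝ) × ℝ × ℝ × ℝ) :=
    {p | (p.2.1 = 0 ∨ p.2.1 = 1) ∧
      p.1 ⬝ᵥ Q.mulVec p.1 + (c + p.2.2.2 - a ⬝ᵥ p.1) ^ 2 ≤ p.2.2.1 ∧
      p.2.2.2 * (1 - p.2.1) = 0} with hYdef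
  set S : Set ((Fin n → ℝ) × ℝ × ℝ × ℝ) :=
    {p | p.2.1 ∈ Set.Icc (0:ℝ) 1 ∧
      ∃ s : ℝ, 0 ≤ s ∧ p.2.2.2 ^ 2 ≤ s * p.2.1 * K ∧
        F p.1 p.2.2.2 + s ≤ p.2.2.1} with hSdef
  show closure (convexHull ℝ Y) = S
  -- closedness of S
  have hFcont : Continuous (fun p : (Fin n → ℝ) × ℝ × ℝ × ℝ => F p.1 p.2.2.2) := by
    rw [hFdef]
    simp only [dotProduct, Matrix.mulVec, Pi.sub_apply, Pi.smul_apply, smul_eq_mul]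
    fun_prop
  have hSalt : S = {p : (Fin n → ℝ) × ℝ × ℝ × ℝ | p.2.1 ∈ Set.Icc (0:ℝ) 1 ∧
      F p.1 p.2.2.2 ≤ p.2.2.1 ∧
      p.2.2.2 ^ 2 ≤ (p.2.2.1 - F p.1 p.2.2.2) * p.2.1 * K} := by
    ext ⟨x, z, t, w⟩
    simp only [hSdef, Set.mem_setOf_eq]
    constructor
    · rintro ⟨hz, s, hs0, hsw, hst⟩
      refine ⟨hz, by linarith, ?_⟩
      have : s * z * K ≤ (t - F x w) * z * K := by
        have := mul_le_mul_of_nonneg_right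
          (mul_le_mul_of_nonneg_right (by linarith : s ≤ t - F x w) hz.1) hK.le
        linarith
      linarith
    · rintro ⟨hz, hq, hw⟩
      exact ⟨hz, t - F x w, by linarith, hw, by linarith⟩
  have hSclosed : IsClosed S := by
    rw [hSalt]
    apply IsClosed.inter
    · exact (isClosed_Icc).preimage (by fun_prop)
    apply IsClosed.inter
    · exact isClosed_le hFcont (by fun_prop)
    · exact isClosed_le (by fun_prop)
        ((((by fun_prop : Continuous fun p : (Fin n → ℝ) × ℝ × ℝ × ℝ => p.2.2.1).sub
          hFcont).mul (by fun_prop)).mul continuous_const)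
  -- convexity of S
  have hSconv : Convex ℝ S := by
    rintro ⟨x₁, z₁, t₁, w₁⟩ ⟨hz₁, s₁, hs₁0, hsw₁, hst₁⟩
      ⟨x₂, z₂, t₂, w₂⟩ ⟨hz₂, s₂, hs₂0, hsw₂, hst₂⟩ l m hl hm hlm
    dsimp only at hz₁ hsw₁ hst₁ hz₂ hsw₂ hst₂
    simp only [hSdef, Prod.smul_mk, Prod.mk_add_mk, smul_eq_mul, Set.mem_setOf_eq]
    refine ⟨⟨by nlinarith [hz₁.1, hz₂.1], by nlinarith [hz₁.2, hz₂.2]⟩,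
      l * s₁ + m * s₂, by positivity, persp hK hz₁.1 hz₂.1 hs₁0 hs₂0 hsw₁ hsw₂ hl hm, ?_⟩
    have hucomb : (l • x₁ + m • x₂) - (l * w₁ + m * w₂) • γ
        = l • (x₁ - w₁ • γ) + m • (x₂ - w₂ • γ) := by
      ext i
      simp only [Pi.add_apply, Pi.sub_apply, Pi.smul_apply, smul_eq_mul]
      ring
    have hq := quad_convex hMpsd (x₁ - w₁ • γ) (x₂ - w₂ • γ) hl hm hlm
    have hlin : a ⬝ᵥ (l • x₁ + m • x₂) = l * (a ⬝ᵥ x₁) + m * (a ⬝ᵥ x₂) := by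
      rw [dotProduct_add, dotProduct_smul, dotProduct_smul, smul_eq_mul, smul_eq_mul]
    simp only [hFdef] at hst₁ hst₂ ⊢
    rw [hucomb, hlin]
    have hm' : m = 1 - l := by linarith
    subst hm'
    linarith [hq, mul_le_mul_of_nonneg_left hst₁ hl, mul_le_mul_of_nonneg_left hst₂ hm]
  -- Y ⊆ S
  have hYsub : Y ⊆ S := by
    rintro ⟨x, z, t, w⟩ ⟨hz01, ht, hwz⟩
    dsimp only at hz01 ht hwz
    rcases hz01 with hz0 | hz1
    · subst hz0
      have hw : w = 0 := by simpa using hwz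
      subst hw
      refine ⟨by norm_num, 0, le_refl _, by norm_num, ?_⟩
      show F x 0 + 0 ≤ t
      have := hkey' x 0
      rw [show (0:ℝ)^2 / K = 0 by simp] at this
      linarith
    · subst hz1
      refine ⟨by norm_num, w^2 / K, by positivity, ?_, ?_⟩
      · show w ^ 2 ≤ w ^ 2 / K * 1 * K
        rw [mul_one, div_mul_cancel₀ _ hK.ne']
      · show F x w + w ^ 2 / K ≤ t
        rw [hkey' x w]
        exact ht
  -- S ⊆ convexHull Y
  have hSsub : S ⊆ convexHull ℝ Y := by
    rintro ⟨x, z, t, w⟩ ⟨hz, s, hs0, hsw, hst⟩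
    dsimp only at hz hsw hst
    rcases eq_or_lt_of_le hz.1 with hz0 | hzpos
    · -- z = 0
      have hz0 : z = 0 := hz0.symm
      subst hz0
      have hw : w = 0 := by nlinarith [sq_nonneg w]
      subst hw
      apply subset_convexHull
      refine ⟨Or.inl rfl, ?_, by ring⟩
      show x ⬝ᵥ Q.mulVec x + (c + 0 - a ⬝ᵥ x) ^ 2 ≤ t
      have h0 := hkey' x 0
      rw [show (0:ℝ)^2 / K = 0 by simp] at h0
      linarith
    · -- z > 0
      have hzne : z ≠ 0 := hzpos.ne'
      set x₀ : Fin n → ℝ := x - w • γ with hx₀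
      set t₀ : ℝ := x₀ ⬝ᵥ Q.mulVec x₀ + (c + 0 - a ⬝ᵥ x₀) ^ 2 with ht₀
      set x₁ : Fin n → ℝ := x + (((1 - z) / z) * w) • γ with hx₁
      set t₁ : ℝ := (t - (1 - z) * t₀) / z with ht₁
      have hmem₀ : ((x₀, (0:ℝ), t₀, (0:ℝ)) : (Fin n → ℝ) × ℝ × ℝ × ℝ) ∈ Y := by
        exact ⟨Or.inl rfl, le_of_eq rfl, by ring⟩
      have hx₁γ : x₁ - (w / z) • γ = x₀ := by
        rw [hx₁, hx₀]
        ext i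
        simp only [Pi.add_apply, Pi.sub_apply, Pi.smul_apply, smul_eq_mul]
        field_simp
        ring
      have hax₁ : a ⬝ᵥ x₁ = a ⬝ᵥ x + (((1 - z) / z) * w) * (a ⬝ᵥ γ) := by
        rw [hx₁, dotProduct_add, dotProduct_smul, smul_eq_mul]
      have hax₀ : a ⬝ᵥ x₀ = a ⬝ᵥ x - w * (a ⬝ᵥ γ) := by
        rw [hx₀, dotProduct_sub, dotProduct_smul, smul_eq_mul]
      have hsbound : w ^ 2 / (z * K) ≤ s := by
        rw [div_le_iff₀ (by positivity)]
        calc w^2 ≤ s * z * K := hsw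
        _ = s * (z * K) := by ring
      have hFx : c ^ 2 + 2 * c * (w - a ⬝ᵥ x) + x₀ ⬝ᵥ M *ᵥ x₀ + s ≤ t := by
        have := hst
        rw [hFdef] at this
        exact this
      have hmem₁ : ((x₁, (1:ℝ), t₁, w / z) : (Fin n → ℝ) × ℝ × ℝ × ℝ) ∈ Y := by
        refine ⟨Or.inr rfl, ?_, by ring⟩
        show x₁ ⬝ᵥ Q.mulVec x₁ + (c + w / z - a ⬝ᵥ x₁) ^ 2 ≤ t₁
        rw [← hkey' x₁ (w / z), hFdef]
        simp only
        rw [hx₁γ, hax₁, ht₁, le_div_iff₀ hzpos]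
        have ht₀E : t₀ = c ^ 2 + 2 * c * (0 - a ⬝ᵥ x₀) + x₀ ⬝ᵥ M *ᵥ x₀ := by
          have h0 := hkey' x₀ 0
          rw [show (0:ℝ)^2 / K = 0 by simp, hFdef] at h0
          simp only [zero_smul, sub_zero] at h0
          rw [ht₀, ← h0]
          ring
        rw [ht₀E, hax₀]
        have hzLHS : (c ^ 2 + 2 * c * (w / z - (a ⬝ᵥ x + (1 - z) / z * w * (a ⬝ᵥ γ)))
              + x₀ ⬝ᵥ M *ᵥ x₀ + (w / z) ^ 2 / K) * z
            = z * c ^ 2 + 2 * c * (w - z * (a ⬝ᵥ x) - (1 - z) * w * (a ⬝ᵥ γ))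
              + z * (x₀ ⬝ᵥ M *ᵥ x₀) + w ^ 2 / (z * K) := by
          field_simp
          ring
        rw [hzLHS]
        linarith [hFx, hsbound]
      have hcomb : z • ((x₁, (1:ℝ), t₁, w / z) : (Fin n → ℝ) × ℝ × ℝ × ℝ)
          + (1 - z) • ((x₀, (0:ℝ), t₀, (0:ℝ)) : (Fin n → ℝ) × ℝ × ℝ × ℝ)
          = (x, z, t, w) := by
        have h1 : z • x₁ + (1 - z) • x₀ = x := by
          rw [hx₁, hx₀]
          ext i
          simp only [Pi.add_apply, Pi.sub_apply, Pi.smul_apply, smul_eq_mul]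
          field_simp
          ring
        have h3 : z * t₁ + (1 - z) * t₀ = t := by
          rw [ht₁]; field_simp; ring
        have h4 : z * (w / z) + (1 - z) * 0 = w := by
          field_simp
          ring
        simp only [Prod.smul_mk, Prod.mk_add_mk, smul_eq_mul, Prod.mk.injEq]
        exact ⟨h1, by ring, h3, h4⟩
      rw [show ((x, z, t, w) : (Fin n → ℝ) × ℝ × ℝ × ℝ) = _ from hcomb.symm]
      exact (convex_convexHull ℝ Y) (subset_convexHull ℝ Y hmem₁)
        (subset_convexHull ℝ Y hmem₀) hzpos.le (by linarith [hz.2]) (by ring)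
  apply Set.Subset.antisymm
  · exact closure_minimal (convexHull_min hYsub hSconv) hSclosed
  · exact hSsub.trans subset_closure
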